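/- Let M and N be vector spaces over a field of characteristic zero, and let B_H, B_K : M × M → N be bilinear maps that are skew-symmetric, i.e. B_H(x,y) = −B_H(y,x) and B_K(x,y) = −B_K(y,x) for all x, y ∈ M. Suppose h : ℕ → M is a sequence satisfying the Lenard–Magri recursion B_H(h_m, x) = B_K(h_{m+1}, x) for all m ∈ ℕ and all x ∈ M. Then B_H(h_m, h_n) = 0 and B_K(h_m, h_n) = 0 for all m, n ∈ ℕ. -/
import Mathlib

/-- **Generalized Lenard–Magri scheme** (abstract core of Proposition 5.2).
If `BH`, `BK` are skew-symmetric bilinear maps and the sequence `h` satisfies the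
Lenard–Magri recursion `BH (h m) x = BK (h (m+1)) x`, then all the `h n` are in
involution with respect to both brackets. -/
theorem stmt_0 {K M N : Type*} [Field K] [CharZero K]
    [AddCommGroup M] [Module K M] [AddCommGroup N] [Module K N]
    (BH BK : M →ₗ[K] M →ₗ[K] N)
    (hH : ∀ x y : M, BH x y = - BH y x)
    (hK : ∀ x y : M, BK x y = - BK y x)
    (h : ℕ → M)
    (hrec : ∀ (m : ℕ) (x : M), BH (h m) x = BK (h (m + 1)) x) :
    ∀ m n : ℕ, BH (h m) (h n) = 0 ∧ BK (h m) (h n) = 0 := by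
  have shift : ∀ m n : ℕ, BK (h m) (h n) = BK (h 0) (h (m + n)) := by
    intro m
    induction m with
    | zero => intro n; rw [Nat.zero_add]
    | succ m ih =>
      intro n
      calc BK (h (m + 1)) (h n) = BH (h m) (h n) := (hrec m (h n)).symm
        _ = - BH (h n) (h m) := hH _ _
        _ = - BK (h (n + 1)) (h m) := by rw [hrec n (h m)]
        _ = BK (h m) (h (n + 1)) := (hK _ _).symm
        _ = BK (h 0) (h (m + (n + 1))) := ih (n + 1)
        _ = BK (h 0) (h (m + 1 + n)) := by ring_nf
  have hKzero : ∀ m n : ℕ, BK (h m) (h n) = 0 := by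
    intro m n
    have h1 := shift m n
    have h2 := shift n m
    have h3 := hK (h m) (h n)
    rw [h1, Nat.add_comm m n] at h3
    rw [h2] at h3
    -- h3 : BK (h 0) (h (n+m)) = - BK (h 0) (h (n+m))
    have : BK (h 0) (h (n + m)) = 0 := by
      have h4 : (2:K) • BK (h 0) (h (n + m)) = 0 := by
        rw [two_smul]
        exact add_eq_zero_iff_eq_neg.mpr h3
      simpa using (smul_eq_zero.mp h4).resolve_left two_ne_zero
    rw [h1, Nat.add_comm m n, this]
  intro m n
  refine ⟨?_, hKzero m n⟩
  rw [hrec m (h n)]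
  exact hKzero (m + 1) n
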